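/- Let P_0,…,P_M be probability measures and X a random variable with finite variance under each P_j. Then Σ_{j=1}^M (E_{P_j}[X] - E_{P_0}[X])² ≤ λ₁(χ²(P_0,…,P_M)) · Var_{P_0}(X) ≤ ‖χ²(P_0,…,P_M)‖_{1,∞} · Var_{P_0}(X), where λ₁ denotes the largest eigenvalue and ‖A‖_{1,∞} := max_i Σ_j |a_{ij}| is the maximum row sum norm, assuming P_j ≪ P_0 for all j. -/

import Mathlib

open MeasureTheory ProbabilityTheory Matrix

/-- The `M × M` chi-square divergence matrix of `P 0, P 1, …, P M`, with `(j,k)` entry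
`∫ (dP_j/dP_0) dP_k - 1`. -/
noncomputable def chiSqMatrix {Ω : Type*} [MeasurableSpace Ω] {M : ℕ}
    (P : Fin (M + 1) → Measure Ω) : Matrix (Fin M) (Fin M) ℝ :=
  Matrix.of fun j k => (∫ ω, ((P j.succ).rnDeriv (P 0) ω).toReal ∂(P k.succ)) - 1

section Aux

private lemma inner_eq_dot {M : ℕ} (u v : EuclideanSpace ℝ (Fin M)) :
    (inner ℝ u v : ℝ) = (u : Fin M → ℝ) ⬝ᵥ (v : Fin M → ℝ) := by
  simp [PiLp.inner_apply, RCLike.inner_apply, dotProduct, starRingEnd_apply, star_trivial, mul_comm]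

private lemma quadform_le_iSup_eigenvalues {M : ℕ} {A : Matrix (Fin M) (Fin M) ℝ}
    (hA : A.IsHermitian) (x : Fin M → ℝ) :
    x ⬝ᵥ (A *ᵥ x) ≤ (⨆ i, hA.eigenvalues i) * (x ⬝ᵥ x) := by
  classical
  have hAt : Aᵀ = A := by
    ext i j
    have := congrFun (congrFun hA.eq i) j
    simpa [Matrix.conjTranspose_apply] using this
  set b := hA.eigenvectorBasis with hb
  set y : EuclideanSpace ℝ (Fin M) := WithLp.toLp 2 x with hy
  set z : EuclideanSpace ℝ (Fin M) := WithLp.toLp 2 (A *ᵥ x) with hz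
  have key : ∀ i, (inner ℝ (b i) z : ℝ) = hA.eigenvalues i * (inner ℝ (b i) y : ℝ) := by
    intro i
    rw [inner_eq_dot, inner_eq_dot]
    show (b i : Fin M → ℝ) ⬝ᵥ (A *ᵥ x) = hA.eigenvalues i * ((b i : Fin M → ℝ) ⬝ᵥ x)
    rw [Matrix.dotProduct_mulVec, ← Matrix.mulVec_transpose, hAt]
    have hmv : A *ᵥ (b i : Fin M → ℝ) = hA.eigenvalues i • (b i : Fin M → ℝ) :=
      hA.mulVec_eigenvectorBasis i
    rw [hmv, smul_dotProduct, smul_eq_mul]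
  have hsum : ∀ w : EuclideanSpace ℝ (Fin M),
      (inner ℝ y w : ℝ) = ∑ i, (inner ℝ (b i) y : ℝ) * (inner ℝ (b i) w : ℝ) := by
    intro w
    rw [← b.sum_inner_mul_inner y w]
    exact Finset.sum_congr rfl fun i _ => by rw [real_inner_comm y (b i)]
  have h1 : x ⬝ᵥ (A *ᵥ x) = ∑ i, hA.eigenvalues i * (inner ℝ (b i) y : ℝ) ^ 2 := by
    rw [show x ⬝ᵥ (A *ᵥ x) = inner ℝ y z from (inner_eq_dot y z).symm, hsum z]
    exact Finset.sum_congr rfl fun i _ => by rw [key i]; ring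
  have h2 : x ⬝ᵥ x = ∑ i, (inner ℝ (b i) y : ℝ) ^ 2 := by
    rw [show x ⬝ᵥ x = inner ℝ y y from (inner_eq_dot y y).symm, hsum y]
    exact Finset.sum_congr rfl fun i _ => (sq _).symm
  rw [h1, h2, Finset.mul_sum]
  refine Finset.sum_le_sum fun i _ => ?_
  exact mul_le_mul_of_nonneg_right
    (le_ciSup (Set.Finite.bddAbove (Set.finite_range _)) i) (sq_nonneg _)

private lemma eig_le_rowsum {M : ℕ} {A : Matrix (Fin M) (Fin M) ℝ}
    (hA : A.IsHermitian) (i : Fin M) :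
    hA.eigenvalues i ≤ ⨆ k : Fin M, ∑ j : Fin M, |A k j| := by
  classical
  have hev : Module.End.HasEigenvalue (Matrix.toLin' A) (hA.eigenvalues i) := by
    refine Module.End.hasEigenvalue_of_hasEigenvector
      (x := (hA.eigenvectorBasis i : Fin M → ℝ)) ⟨?_, ?_⟩
    · rw [Module.End.mem_eigenspace_iff]
      show Matrix.toLin' A (hA.eigenvectorBasis i : Fin M → ℝ)
        = hA.eigenvalues i • (hA.eigenvectorBasis i : Fin M → ℝ)
      rw [Matrix.toLin'_apply]
      exact hA.mulVec_eigenvectorBasis i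
    · intro h
      exact hA.eigenvectorBasis.orthonormal.ne_zero i (by simpa using congrArg (WithLp.toLp 2) h)
  obtain ⟨k, hk⟩ := eigenvalue_mem_ball hev
  rw [Metric.mem_closedBall, Real.dist_eq] at hk
  have habs := abs_le.mp hk
  have h1 : hA.eigenvalues i ≤ A k k + ∑ j ∈ Finset.univ.erase k, ‖A k j‖ := by
    linarith [habs.2]
  have h2 : A k k + ∑ j ∈ Finset.univ.erase k, ‖A k j‖ ≤ ∑ j, |A k j| := by
    have he : |A k k| + ∑ j ∈ Finset.univ.erase k, |A k j| = ∑ j, |A k j| :=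
      Finset.add_sum_erase Finset.univ (fun j => |A k j|) (Finset.mem_univ k)
    rw [← he]
    simp only [Real.norm_eq_abs]
    linarith [le_abs_self (A k k)]
  exact h1.trans (h2.trans (le_ciSup (f := fun k : Fin M => ∑ j : Fin M, |A k j|)
    (Set.Finite.bddAbove (Set.finite_range _)) k))

private lemma integral_CS {Ω : Type*} [MeasurableSpace Ω] {μ : Measure Ω}
    (f g : Ω → ℝ) (hf : MemLp f 2 μ) (hg : MemLp g 2 μ) :
    (∫ ω, f ω * g ω ∂μ) ^ 2 ≤ (∫ ω, f ω ^ 2 ∂μ) * (∫ ω, g ω ^ 2 ∂μ) := by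
  have hin : ∀ (u v : Ω → ℝ) (hu : MemLp u 2 μ) (hv : MemLp v 2 μ),
      (inner ℝ (hu.toLp u) (hv.toLp v) : ℝ) = ∫ ω, u ω * v ω ∂μ := by
    intro u v hu hv
    rw [L2.inner_def]
    apply integral_congr_ae
    filter_upwards [hu.coeFn_toLp, hv.coeFn_toLp] with ω h1 h2
    simp [h1, h2, RCLike.inner_apply, starRingEnd_apply, star_trivial, mul_comm]
  have := real_inner_mul_inner_self_le (hf.toLp f) (hg.toLp g)
  rw [hin f g hf hg, hin f f hf hf, hin g g hg hg] at this
  calc (∫ ω, f ω * g ω ∂μ) ^ 2 = (∫ ω, f ω * g ω ∂μ) * (∫ ω, f ω * g ω ∂μ) := sq _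
    _ ≤ (∫ ω, f ω * f ω ∂μ) * (∫ ω, g ω * g ω ∂μ) := this
    _ = (∫ ω, f ω ^ 2 ∂μ) * (∫ ω, g ω ^ 2 ∂μ) := by
        congr 1 <;> exact integral_congr_ae (ae_of_all _ fun ω => (sq _).symm)

end Aux

/-- `Σ_j (E_{P_j}[X]-E_{P_0}[X])² ≤ λ₁(χ²(P_0,…,P_M)) Var_{P_0}(X)
  ≤ ‖χ²(P_0,…,P_M)‖_{1,∞} Var_{P_0}(X)`,
where `λ₁` is the largest eigenvalue and `‖A‖_{1,∞} = max_i Σ_j |a_{ij}|` is the maximum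
row sum norm. -/
theorem stmt13 {Ω : Type*} [MeasurableSpace Ω] {M : ℕ}
    (P : Fin (M + 1) → Measure Ω) [∀ j, IsProbabilityMeasure (P j)]
    (hAC : ∀ j : Fin M, P j.succ ≪ P 0)
    (hInt : ∀ j k : Fin M,
      Integrable (fun ω => ((P j.succ).rnDeriv (P 0) ω).toReal) (P k.succ))
    (X : Ω → ℝ) (hX : ∀ j, MemLp X 2 (P j))
    (hA : (chiSqMatrix P).IsHermitian) :
    (∑ j : Fin M, ((∫ ω, X ω ∂(P j.succ)) - ∫ ω, X ω ∂(P 0)) ^ 2 ≤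
      (⨆ i, hA.eigenvalues i) * variance X (P 0)) ∧
    (⨆ i, hA.eigenvalues i) * variance X (P 0) ≤
      (⨆ i : Fin M, ∑ j : Fin M, |chiSqMatrix P i j|) * variance X (P 0) := by
  classical
  set A := chiSqMatrix P with hAdef
  set μ := P 0 with hμdef
  haveI hPμ : IsProbabilityMeasure μ := inferInstanceAs (IsProbabilityMeasure (P 0))
  set m : ℝ := ∫ ω, X ω ∂μ with hmdef
  set Y : Ω → ℝ := fun ω => X ω - m with hYdef
  set L : Fin M → Ω → ℝ := fun j ω => ((P j.succ).rnDeriv μ ω).toReal with hLdef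
  set Δ : Fin M → ℝ := fun j => (∫ ω, X ω ∂(P j.succ)) - m with hΔdef
  -- basic integrabilities
  have hXint : ∀ j : Fin (M + 1), Integrable X (P j) := fun j => (hX j).integrable one_le_two
  have hYmem : MemLp Y 2 μ := (hX 0).sub (memLp_const m)
  have hYintP : ∀ j : Fin (M + 1), Integrable Y (P j) := fun j =>
    ((hX j).sub (memLp_const m)).integrable one_le_two
  have hY0 : ∫ ω, Y ω ∂μ = 0 := by
    rw [hYdef]
    rw [integral_sub (hXint 0) (integrable_const m), integral_const]
    simp [hmdef, hμdef]
  have hVar : variance X μ = ∫ ω, Y ω ^ 2 ∂μ := by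
    rw [variance_eq_integral (hX 0).aestronglyMeasurable.aemeasurable]
  have hLint : ∀ j, Integrable (L j) μ := fun j =>
    integrableOn_univ.mp (Measure.integrableOn_toReal_rnDeriv (measure_ne_top _ _))
  have hL1 : ∀ j, ∫ ω, L j ω ∂μ = 1 := fun j => by
    rw [hLdef]
    rw [Measure.integral_toReal_rnDeriv (hAC j)]
    simp
  have hLLint : ∀ j k, Integrable (fun ω => L j ω * L k ω) μ := by
    intro j k
    have h := (integrable_rnDeriv_smul_iff (hAC k)).mpr (hInt j k)
    simp only [smul_eq_mul] at h
    have : (fun ω => L j ω * L k ω) =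
        fun ω => ((P k.succ).rnDeriv μ ω).toReal * ((P j.succ).rnDeriv μ ω).toReal := by
      funext ω; rw [hLdef]; ring
    rw [this]
    exact h
  have hchg : ∀ (j : Fin M) (f : Ω → ℝ),
      ∫ ω, L j ω * f ω ∂μ = ∫ ω, f ω ∂(P j.succ) := by
    intro j f
    have := integral_rnDeriv_smul (hAC j) (f := f)
    simpa [hLdef, smul_eq_mul] using this
  have hsubint : ∀ j k, Integrable (fun ω => (L j ω - 1) * (L k ω - 1)) μ := by
    intro j k
    have e : (fun ω => (L j ω - 1) * (L k ω - 1)) =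
        fun ω => L j ω * L k ω - L j ω - L k ω + 1 := by funext ω; ring
    rw [e]
    exact (((hLLint j k).sub (hLint j)).sub (hLint k)).add (integrable_const 1)
  have hAentry : ∀ j k, A j k = ∫ ω, (L j ω - 1) * (L k ω - 1) ∂μ := by
    intro j k
    have e1 : ∫ ω, (L j ω - 1) * (L k ω - 1) ∂μ
        = ∫ ω, (L k ω * L j ω - L j ω - L k ω + 1) ∂μ := by
      congr 1; funext ω; ring
    have i1 : Integrable (fun ω => L k ω * L j ω - L j ω) μ := (hLLint k j).sub (hLint j)
    have i2 : Integrable (fun ω => L k ω * L j ω - L j ω - L k ω) μ := i1.sub (hLint k)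
    have e2 : ∫ ω, (L k ω * L j ω - L j ω - L k ω + 1) ∂μ
        = ((∫ ω, L k ω * L j ω ∂μ) - (∫ ω, L j ω ∂μ) - (∫ ω, L k ω ∂μ)) + (∫ _ω, (1:ℝ) ∂μ) := by
      rw [integral_add i2 (integrable_const 1), integral_sub i1 (hLint k),
        integral_sub (hLLint k j) (hLint j)]
    have h1 : A j k = (∫ ω, L j ω ∂(P k.succ)) - 1 := rfl
    rw [h1, ← hchg k (L j), e1, e2, hL1 j, hL1 k]
    simp
  have hLYint : ∀ j, Integrable (fun ω => L j ω * Y ω) μ := by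
    intro j
    have h := (integrable_rnDeriv_smul_iff (hAC j)).mpr (hYintP j.succ)
    simpa [hLdef, smul_eq_mul] using h
  have hYL1int : ∀ j, Integrable (fun ω => Y ω * (L j ω - 1)) μ := by
    intro j
    have e : (fun ω => Y ω * (L j ω - 1)) = fun ω => L j ω * Y ω - Y ω := by funext ω; ring
    rw [e]
    have : Integrable (fun ω => L j ω * Y ω - Y ω) μ := (hLYint j).sub (hYintP 0)
    exact this
  have hΔeq : ∀ j, Δ j = ∫ ω, Y ω * (L j ω - 1) ∂μ := by
    intro j
    have e1 : ∫ ω, Y ω * (L j ω - 1) ∂μ = ∫ ω, (L j ω * Y ω - Y ω) ∂μ := by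
      congr 1; funext ω; ring
    have isub : ∫ ω, (L j ω * Y ω - Y ω) ∂μ = (∫ ω, L j ω * Y ω ∂μ) - ∫ ω, Y ω ∂μ :=
      integral_sub (hLYint j) (hYintP 0)
    rw [e1, isub, hchg j Y, hY0, sub_zero, hΔdef]
    rw [hYdef]
    rw [integral_sub (hXint j.succ) (integrable_const m), integral_const]
    simp
  have hterm : ∀ (v : Fin M → ℝ) j k,
      Integrable (fun ω => (v j * (L j ω - 1)) * (v k * (L k ω - 1))) μ := by
    intro v j k
    have e : (fun ω => (v j * (L j ω - 1)) * (v k * (L k ω - 1))) =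
        fun ω => (v j * v k) * ((L j ω - 1) * (L k ω - 1)) := by funext ω; ring
    rw [e]
    exact (hsubint j k).const_mul _
  have hquad : ∀ v : Fin M → ℝ,
      v ⬝ᵥ (A *ᵥ v) = ∫ ω, (∑ j, v j * (L j ω - 1)) ^ 2 ∂μ := by
    intro v
    have e1 : ∀ ω : Ω, (∑ j, v j * (L j ω - 1)) ^ 2
        = ∑ j, ∑ k, (v j * (L j ω - 1)) * (v k * (L k ω - 1)) := by
      intro ω; rw [sq, Finset.sum_mul_sum]
    calc v ⬝ᵥ (A *ᵥ v) = ∑ j, ∑ k, v j * (A j k * v k) := by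
          simp [dotProduct, Matrix.mulVec, Finset.mul_sum]
      _ = ∑ j, ∑ k, ∫ ω, (v j * (L j ω - 1)) * (v k * (L k ω - 1)) ∂μ := by
          refine Finset.sum_congr rfl fun j _ => Finset.sum_congr rfl fun k _ => ?_
          have e2 : ∫ ω, (v j * (L j ω - 1)) * (v k * (L k ω - 1)) ∂μ
              = (v j * v k) * ∫ ω, (L j ω - 1) * (L k ω - 1) ∂μ := by
            rw [← integral_const_mul]
            congr 1; funext ω; ring
          rw [e2, ← hAentry j k]; ring
      _ = ∫ ω, ∑ j, ∑ k, (v j * (L j ω - 1)) * (v k * (L k ω - 1)) ∂μ := by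
          rw [integral_finset_sum _ (fun j _ =>
            integrable_finset_sum _ (fun k _ => hterm v j k))]
          exact Finset.sum_congr rfl fun j _ =>
            (integral_finset_sum _ fun k _ => hterm v j k).symm
      _ = ∫ ω, (∑ j, v j * (L j ω - 1)) ^ 2 ∂μ := by
          congr 1; funext ω; rw [e1 ω]
  -- g and its properties
  set g : Ω → ℝ := fun ω => ∑ j, Δ j * (L j ω - 1) with hgdef
  have hgmeas : Measurable g := by
    rw [hgdef]
    exact Finset.measurable_sum _ fun j _ =>
      (((Measure.measurable_rnDeriv _ _).ennreal_toReal.sub measurable_const).const_mul _)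
  have hgsqint : Integrable (fun ω => g ω ^ 2) μ := by
    have e : (fun ω => g ω ^ 2) =
        fun ω => ∑ j, ∑ k, (Δ j * (L j ω - 1)) * (Δ k * (L k ω - 1)) := by
      funext ω; rw [hgdef, sq, Finset.sum_mul_sum]
    rw [e]
    exact integrable_finset_sum _ fun j _ => integrable_finset_sum _ fun k _ => hterm Δ j k
  have hgmem : MemLp g 2 μ :=
    (memLp_two_iff_integrable_sq hgmeas.aestronglyMeasurable).mpr hgsqint
  have hYg : ∫ ω, Y ω * g ω ∂μ = ∑ j, Δ j ^ 2 := by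
    have e : (fun ω => Y ω * g ω) = fun ω => ∑ j, Δ j * (Y ω * (L j ω - 1)) := by
      funext ω
      rw [hgdef, Finset.mul_sum]
      exact Finset.sum_congr rfl fun j _ => by ring
    rw [e, integral_finset_sum _ (fun j _ => (hYL1int j).const_mul _)]
    refine Finset.sum_congr rfl fun j _ => ?_
    rw [integral_const_mul, ← hΔeq j, sq]
  -- Cauchy-Schwarz chain
  have hCS := integral_CS Y g hYmem hgmem
  rw [hYg, ← hVar] at hCS
  have hquadΔ := hquad Δ
  have hgq : ∫ ω, g ω ^ 2 ∂μ = Δ ⬝ᵥ (A *ᵥ Δ) := by rw [hquadΔ]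
  rw [hgq] at hCS
  have hR := quadform_le_iSup_eigenvalues hA Δ
  have hSdot : Δ ⬝ᵥ Δ = ∑ j, Δ j ^ 2 := by
    simp [dotProduct, sq]
  rw [hSdot] at hR
  have hlamnn : 0 ≤ ⨆ i, hA.eigenvalues i := by
    rcases isEmpty_or_nonempty (Fin M) with hM | hM
    · simp [Real.iSup_of_isEmpty]
    · obtain ⟨i⟩ := hM
      have h0 : 0 ≤ hA.eigenvalues i := by
        have he := hA.eigenvalues_eq i
        have he' : hA.eigenvalues i =
            (hA.eigenvectorBasis i : Fin M → ℝ) ⬝ᵥ (A *ᵥ (hA.eigenvectorBasis i : Fin M → ℝ)) := by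
          simpa using he
        rw [he', hquad]
        exact integral_nonneg fun ω => sq_nonneg _
      exact h0.trans (le_ciSup (Set.Finite.bddAbove (Set.finite_range _)) i)
  have hgoalsum : ∑ j : Fin M, ((∫ ω, X ω ∂(P j.succ)) - m) ^ 2 = ∑ j, Δ j ^ 2 := by
    simp only [hΔdef]
  constructor
  · rw [hgoalsum]
    have hSnn : 0 ≤ ∑ j, Δ j ^ 2 := Finset.sum_nonneg fun j _ => sq_nonneg _
    rcases hSnn.eq_or_lt with h | h
    · rw [← h]
      exact mul_nonneg hlamnn (variance_nonneg X μ)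
    · nlinarith [hCS, hR, variance_nonneg X μ, h]
  · refine mul_le_mul_of_nonneg_right ?_ (variance_nonneg X μ)
    rcases isEmpty_or_nonempty (Fin M) with hM | hM
    · simp [Real.iSup_of_isEmpty]
    · exact ciSup_le fun i => eig_le_rowsum hA i
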